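/- Let m ≥ 1 be an integer and let γ > 1 + 1/m be a real number. Define h : (0, ∞) → ℝ by h(x) = x³·exp(-1/x^m). Then there exist C > 0 and δ > 0 such that h'(x) ≤ C·h(x)·(-log h(x))^γ for all x ∈ (0, δ). -/

import Mathlib

open Set Filter

/-- **Analytic content of Examples 3.5 and 3.6 of the paper.** For an integer `m ≥ 1`,
the function `h x = x³·exp(-1/xᵐ)` satisfies, for every real `γ > 1 + 1/m`, a bound
`h'(x) ≤ C·h(x)·(-log h(x))^γ` for all sufficiently small `x > 0`. -/
theorem example_log_lipschitz_bound (m : ℕ) (hm : 1 ≤ m) (γ : ℝ)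
    (hγ : 1 + 1 / (m : ℝ) < γ) :
    ∃ C > (0 : ℝ), ∃ δ > (0 : ℝ), ∀ x ∈ Set.Ioo (0 : ℝ) δ,
      deriv (fun x : ℝ => x ^ 3 * Real.exp (-1 / x ^ m)) x ≤
        C * (x ^ 3 * Real.exp (-1 / x ^ m)) *
          (-Real.log (x ^ 3 * Real.exp (-1 / x ^ m))) ^ γ := by
  obtain ⟨k, rfl⟩ : ∃ k, m = k + 1 := ⟨m - 1, (Nat.succ_pred_eq_of_pos hm).symm⟩
  refine ⟨(k : ℝ) + 1 + 3, by positivity, 1, one_pos, ?_⟩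
  rintro x ⟨hx0, hx1⟩
  have hxm : x ^ (k + 1) ≠ 0 := pow_ne_zero _ hx0.ne'
  set E := Real.exp (-1 / x ^ (k + 1)) with hE
  have hEpos : 0 < E := Real.exp_pos _
  have hm0 : ((k : ℝ) + 1) ≠ 0 := by positivity
  -- derivative computation
  have h2 : HasDerivAt (fun y : ℝ => -1 / y ^ (k + 1))
      ((0 * x ^ (k + 1) - (-1) * ((k + 1 : ℕ) * x ^ (k + 1 - 1))) / (x ^ (k + 1)) ^ 2) x :=
    (hasDerivAt_const x (-1 : ℝ)).div (hasDerivAt_pow (k + 1) x) hxm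
  have hd := (hasDerivAt_pow 3 x).mul h2.exp
  rw [show deriv (fun x : ℝ => x ^ 3 * Real.exp (-1 / x ^ (k + 1))) x = _ from hd.deriv]
  -- positivity facts
  have hγ0 : (0 : ℝ) ≤ γ := by
    have : (0:ℝ) < 1 + 1 / ((k:ℝ)+1) := by positivity
    push_cast at hγ ⊢; linarith
  have hxm1 : x ^ (k + 1) ≤ 1 := pow_le_one₀ hx0.le hx1.le
  -- log bound
  have hL : 1 / x ^ (k + 1) ≤ -Real.log (x ^ 3 * E) := by
    rw [hE, Real.log_mul (by positivity) (Real.exp_pos _).ne', Real.log_exp, Real.log_pow]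
    have hlx : Real.log x ≤ 0 := Real.log_nonpos hx0.le hx1.le
    have : -1 / x ^ (k+1) = -(1 / x ^ (k+1)) := by ring
    rw [this]
    push_cast
    nlinarith
  -- rpow computation
  have hcomp : (1 / x ^ (k + 1) : ℝ) ^ ((((k:ℝ)+1) + 1) / ((k:ℝ)+1)) = 1 / x ^ (k + 2) := by
    rw [one_div, one_div, ← inv_pow, ← inv_pow, ← Real.rpow_natCast (x⁻¹) (k+1),
      ← Real.rpow_mul (by positivity)]
    rw [show ((k+1 : ℕ):ℝ) * ((((k:ℝ)+1) + 1) / ((k:ℝ)+1)) = ((k+2 : ℕ):ℝ) by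
      push_cast; field_simp; ring]
    rw [Real.rpow_natCast]
  have hb1 : (1:ℝ) ≤ 1 / x ^ (k + 1) := by
    rw [le_div_iff₀ (by positivity), one_mul]; exact hxm1
  have key : (1:ℝ) / x ^ (k + 2) ≤ (-Real.log (x ^ 3 * E)) ^ γ := by
    calc (1:ℝ) / x ^ (k + 2) = (1 / x ^ (k + 1) : ℝ) ^ ((((k:ℝ)+1) + 1) / ((k:ℝ)+1)) :=
          hcomp.symm
      _ ≤ (1 / x ^ (k + 1) : ℝ) ^ γ := by
          apply Real.rpow_le_rpow_of_exponent_le hb1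
          have : (((k:ℝ)+1) + 1) / ((k:ℝ)+1) = 1 + 1 / ((k:ℝ)+1) := by field_simp
          rw [this]; push_cast at hγ; linarith
      _ ≤ (-Real.log (x ^ 3 * E)) ^ γ :=
          Real.rpow_le_rpow (by positivity) hL hγ0
  -- algebraic identity for the second derivative term
  have e1 : x ^ 3 * (E * ((0 * x ^ (k + 1) - (-1) * ((k + 1 : ℕ) * x ^ (k + 1 - 1))) / (x ^ (k + 1)) ^ 2))
      = ((k:ℝ) + 1) * (x ^ 3 * E) * (1 / x ^ (k + 2)) := by
    simp only [Nat.add_sub_cancel]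
    push_cast
    field_simp
    ring
  -- bound for the first term
  have e2 : (3:ℝ) * x ^ 2 * E ≤ 3 * (x ^ 3 * E) * (1 / x ^ (k + 2)) := by
    rw [mul_one_div]
    rw [show (3:ℝ) * (x^3*E) / x^(k+2) = 3 * E * (x^3 / x^(k+2)) by ring]
    have hp : x ^ (k + 4) ≤ x ^ 3 := pow_le_pow_of_le_one hx0.le hx1.le (by omega)
    have : x ^ 2 ≤ x ^ 3 / x ^ (k + 2) := by
      rw [le_div_iff₀ (by positivity)]
      calc x ^ 2 * x ^ (k + 2) = x ^ (k + 4) := by ring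
        _ ≤ x ^ 3 := hp
    nlinarith
  calc (↑3 * x ^ (3 - 1) * Real.exp (-1 / x ^ (k+1)) +
      x ^ 3 * (Real.exp (-1 / x ^ (k+1)) * ((0 * x ^ (k + 1) - (-1) * ((k + 1 : ℕ) * x ^ (k + 1 - 1))) / (x ^ (k + 1)) ^ 2)))
      ≤ 3 * (x ^ 3 * E) * (1 / x ^ (k + 2)) + ((k:ℝ) + 1) * (x ^ 3 * E) * (1 / x ^ (k + 2)) := by
        rw [← hE, e1]
        norm_num
        simpa [one_div] using e2
    _ = ((k:ℝ) + 1 + 3) * (x ^ 3 * E) * (1 / x ^ (k + 2)) := by ring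
    _ ≤ ((k:ℝ) + 1 + 3) * (x ^ 3 * E) * (-Real.log (x ^ 3 * E)) ^ γ := by
        apply mul_le_mul_of_nonneg_left key (by positivity)
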